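/- Let G be a group and H ≤ G a subgroup such that (1) there are only finitely many conjugacy classes of subgroups of G isomorphic to H, (2) Out(H) is finite, and (3) the center Z(G) has finite index in the centralizer C_G(H). Then H is an Aut-splitting subgroup of G. -/

import Mathlib

section Defs

variable (G : Type*) [Group G]

/-- The subgroup of inner automorphisms of `G`. -/
def Inn : Subgroup (MulAut G) := (MulAut.conj : G →* MulAut G).range

instance Inn.normal : (Inn G).Normal := by
  constructor
  intro n hn φ
  obtain ⟨g, rfl⟩ := hn
  refine ⟨φ g, ?_⟩
  ext x
  simp only [MulAut.conj_apply, MulAut.mul_apply, map_mul, map_inv, MulAut.inv_def,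
    MulEquiv.apply_symm_apply]

/-- The outer automorphism group `Out(G) = Aut(G)/Inn(G)`. -/
def Out := MulAut G ⧸ Inn G

instance : Group (Out G) := inferInstanceAs (Group (MulAut G ⧸ Inn G))

/-- The canonical projection `Aut(G) → Out(G)`. -/
def outProj : MulAut G →* Out G := QuotientGroup.mk' (Inn G)

/-- A surjective homomorphism `f : A → B` splits virtually if it admits a section on some
finite-index subgroup of `B`. -/
def SplitsVirtually {A B : Type*} [Group A] [Group B] (f : A →* B) : Prop :=
  ∃ B' : Subgroup B, B'.FiniteIndex ∧ ∃ s : (↥B') →* A, ∀ x : B', f (s x) = (x : B)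

/-- A group is residually finite if every nontrivial element survives in some finite quotient. -/
def ResiduallyFinite (G : Type*) [Group G] : Prop :=
  ∀ g : G, g ≠ 1 → ∃ (F : Type) (_ : Group F) (_ : Finite F) (φ : G →* F), φ g ≠ 1

/-- A group is residually `p` if every nontrivial element survives in some finite `p`-group
quotient. -/
def ResiduallyP (p : ℕ) (G : Type*) [Group G] : Prop :=
  ∀ g : G, g ≠ 1 →
    ∃ (F : Type) (_ : Group F) (_ : Finite F) (φ : G →* F), IsPGroup p F ∧ φ g ≠ 1

/-- A group is virtually residually `p` if some finite-index subgroup is residually `p`. -/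
def VirtuallyResiduallyP (p : ℕ) (G : Type*) [Group G] : Prop :=
  ∃ K : Subgroup G, K.FiniteIndex ∧ ResiduallyP p ↥K

/-- `Aut_{H̲}(G)`: the subgroup of automorphisms of `G` fixing `H` pointwise. -/
def autFix (H : Subgroup G) : Subgroup (MulAut G) where
  carrier := {φ | ∀ h ∈ H, φ h = h}
  one_mem' := fun _ _ => rfl
  mul_mem' := by
    intro a b ha hb h hh
    show a (b h) = h
    rw [hb h hh, ha h hh]
  inv_mem' := by
    intro a ha h hh
    show a⁻¹ h = h
    calc a⁻¹ h = a⁻¹ (a h) := by rw [ha h hh]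
    _ = h := by rw [MulAut.inv_def]; exact a.symm_apply_apply h

/-- `Aut_H(G)`: the subgroup of automorphisms of `G` mapping `H` onto itself. -/
def autSetwise (H : Subgroup G) : Subgroup (MulAut G) where
  carrier := {φ | ∀ g : G, φ g ∈ H ↔ g ∈ H}
  one_mem' := fun _ => Iff.rfl
  mul_mem' := by
    intro a b ha hb g
    show a (b g) ∈ H ↔ g ∈ H
    rw [ha, hb]
  inv_mem' := by
    intro a ha g
    show a⁻¹ g ∈ H ↔ g ∈ H
    have h1 : a (a⁻¹ g) = g := by rw [MulAut.inv_def]; exact a.apply_symm_apply g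
    have := ha (a⁻¹ g)
    rw [h1] at this
    exact this.symm

theorem mem_autSetwise {H : Subgroup G} {φ : MulAut G} :
    φ ∈ autSetwise G H ↔ ∀ g : G, φ g ∈ H ↔ g ∈ H := Iff.rfl

/-- `H` is an Aut-splitting subgroup of `G` if the restriction of `Aut(G) → Out(G)` to
`Aut_{H̲}(G)` has finite kernel and an image of finite index in `Out(G)`. -/
def IsAutSplitting (H : Subgroup G) : Prop :=
  Finite ((outProj G).comp (autFix G H).subtype).ker ∧
    ((autFix G H).map (outProj G)).FiniteIndex

/-- The conjugate `gKg⁻¹` of a subgroup. -/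
def conjSubgroup (g : G) (K : Subgroup G) : Subgroup G :=
  K.map (MulAut.conj g).toMonoidHom

end Defs


section Aux

variable {G : Type*} [Group G]

lemma mem_conjSubgroup {g x : G} {K : Subgroup G} :
    x ∈ conjSubgroup G g K ↔ (MulAut.conj g).symm x ∈ K :=
  Subgroup.mem_map_equiv

lemma conjSubgroup_conjSubgroup (g g' : G) (K : Subgroup G) :
    conjSubgroup G g (conjSubgroup G g' K) = conjSubgroup G (g * g') K := by
  unfold conjSubgroup
  rw [Subgroup.map_map]
  congr 1
  ext x
  simp [mul_assoc]

lemma conjSubgroup_one (K : Subgroup G) : conjSubgroup G 1 K = K := by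
  ext x
  rw [mem_conjSubgroup, MulAut.conj_symm_apply]
  simp

/-- Conjugacy of subgroups as a setoid. -/
def conjSetoid (G : Type*) [Group G] : Setoid (Subgroup G) where
  r K L := ∃ g, conjSubgroup G g K = L
  iseqv := by
    refine ⟨fun K => ⟨1, conjSubgroup_one K⟩, ?_, ?_⟩
    · rintro K L ⟨g, rfl⟩
      exact ⟨g⁻¹, by rw [conjSubgroup_conjSubgroup, inv_mul_cancel, conjSubgroup_one]⟩
    · rintro K L M ⟨g, rfl⟩ ⟨g', rfl⟩
      exact ⟨g' * g, (conjSubgroup_conjSubgroup g' g K).symm⟩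

/-- A conjugate subgroup is isomorphic to the original. -/
noncomputable def conjEquiv (g : G) (K : Subgroup G) : ↥K ≃* ↥(conjSubgroup G g K) :=
  K.equivMapOfInjective (MulAut.conj g).toMonoidHom (MulAut.conj g).injective

lemma mapAut_mul (a b : MulAut G) (K : Subgroup G) :
    K.map (a * b).toMonoidHom = (K.map b.toMonoidHom).map a.toMonoidHom := by
  rw [Subgroup.map_map]
  congr 1

lemma mapAut_one (K : Subgroup G) : K.map (1 : MulAut G).toMonoidHom = K := by
  ext x
  simp [Subgroup.mem_map]

lemma mapAut_conjSubgroup (φ : MulAut G) (g : G) (K : Subgroup G) :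
    (conjSubgroup G g K).map φ.toMonoidHom = conjSubgroup G (φ g) (K.map φ.toMonoidHom) := by
  unfold conjSubgroup
  rw [Subgroup.map_map, Subgroup.map_map]
  congr 1
  ext x
  simp [mul_assoc]

lemma autSetwise_map_eq {H : Subgroup G} {φ : MulAut G} (hφ : φ ∈ autSetwise G H) :
    H.map φ.toMonoidHom = H := by
  ext x
  constructor
  · rintro ⟨y, hy, rfl⟩
    exact (hφ y).mpr hy
  · intro hx
    refine ⟨φ⁻¹ x, ?_, ?_⟩
    · exact ((inv_mem hφ : φ⁻¹ ∈ autSetwise G H) x).mpr hx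
    · show φ (φ⁻¹ x) = x
      rw [MulAut.inv_def]
      exact φ.apply_symm_apply x
lemma mem_autSetwise_of_map_eq {H : Subgroup G} {φ : MulAut G}
    (h : H.map φ.toMonoidHom = H) : φ ∈ autSetwise G H := by
  intro g
  constructor
  · intro hg
    rw [← h] at hg
    obtain ⟨y, hy, hyy⟩ := hg
    have : y = g := φ.injective hyy
    rwa [← this]
  · intro hg
    rw [← h]
    exact ⟨g, hg, rfl⟩

lemma autFix_le_autSetwise {H : Subgroup G} : autFix G H ≤ autSetwise G H := by
  intro φ hφ g
  constructor
  · intro hg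
    have h2 : φ⁻¹ ∈ autFix G H := inv_mem hφ
    have h3 : φ⁻¹ (φ g) = φ g := h2 (φ g) hg
    have h4 : φ⁻¹ (φ g) = g := by
      rw [MulAut.inv_def]; exact φ.symm_apply_apply g
    rw [h4] at h3
    rw [h3]; exact hg
  · intro hg
    rw [hφ g hg]; exact hg

/-- Restriction of a setwise-stabilizing automorphism to `H`. -/
def resAut (H : Subgroup G) : ↥(autSetwise G H) →* MulAut ↥H where
  toFun φ :=
    { toFun := fun h => ⟨φ.1 (h : G), (φ.2 (h : G)).mpr h.2⟩
      invFun := fun h => ⟨φ.1⁻¹ (h : G), ((inv_mem φ.2 : φ.1⁻¹ ∈ autSetwise G H) (h : G)).mpr h.2⟩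
      left_inv := fun h => Subtype.ext (by
        show φ.1⁻¹ (φ.1 (h : G)) = (h : G)
        rw [MulAut.inv_def]; exact φ.1.symm_apply_apply _)
      right_inv := fun h => Subtype.ext (by
        show φ.1 (φ.1⁻¹ (h : G)) = (h : G)
        rw [MulAut.inv_def]; exact φ.1.apply_symm_apply _)
      map_mul' := fun x y => Subtype.ext (map_mul φ.1 (x : G) (y : G)) }
  map_one' := by ext h; rfl
  map_mul' := fun a b => by ext h; rfl

lemma outProj_eq_one_iff {G : Type*} [Group G] {φ : MulAut G} :
    outProj G φ = 1 ↔ φ ∈ Inn G := by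
  show (QuotientGroup.mk' (Inn G)) φ = (1 : MulAut G ⧸ Inn G) ↔ φ ∈ Inn G
  rw [← MonoidHom.mem_ker, QuotientGroup.ker_mk']

lemma outProj_eq_iff {G : Type*} [Group G] {a b : MulAut G} :
    outProj G a = outProj G b ↔ ∃ z ∈ Inn G, a * z = b :=
  QuotientGroup.mk'_eq_mk' _

lemma outProj_conj {G : Type*} [Group G] (g : G) : outProj G (MulAut.conj g) = 1 :=
  outProj_eq_one_iff.mpr ⟨g, rfl⟩

end Aux

/-- If there are finitely many conjugacy classes of subgroups of `G`
isomorphic to `H`, `Out(H)` is finite, and `Z(G)` has finite index in `C_G(H)`, then `H` is an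
Aut-splitting subgroup of `G`. -/
theorem statement15 (G : Type*) [Group G] (H : Subgroup G)
    (hconj : ∃ S : Finset (Subgroup G), ∀ K : Subgroup G, Nonempty (↥K ≃* ↥H) →
      ∃ K' ∈ S, ∃ g : G, conjSubgroup G g K = K')
    (hout : Finite (Out ↥H))
    (hcent : (Subgroup.center G).relIndex (Subgroup.centralizer (H : Set G)) ≠ 0) :
    IsAutSplitting G H := by
  constructor
  · -- the kernel is finite
    set C := Subgroup.centralizer (H : Set G) with hC
    haveI hZc : ((Subgroup.center G).subgroupOf C).FiniteIndex := ⟨hcent⟩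
    let c : ↥C → ((outProj G).comp (autFix G H).subtype).ker := fun g =>
      ⟨⟨MulAut.conj (g : G), by
          intro h hh
          have hc := Subgroup.mem_centralizer_iff.mp g.2 h hh
          show (g : G) * h * (g : G)⁻¹ = h
          rw [← hc, mul_inv_cancel_right]⟩,
        MonoidHom.mem_ker.mpr (outProj_conj (g : G))⟩
    have hwd : ∀ a b : ↥C,
        (QuotientGroup.leftRel ((Subgroup.center G).subgroupOf C)) a b → c a = c b := by
      intro a b hab
      rw [QuotientGroup.leftRel_apply] at hab
      have hz : ((a⁻¹ * b : ↥C) : G) ∈ Subgroup.center G := Subgroup.mem_subgroupOf.mp hab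
      set z := ((a⁻¹ * b : ↥C) : G) with hzdef
      have hb : (b : G) = (a : G) * z := by
        rw [hzdef]
        push_cast
        rw [mul_inv_cancel_left]
      apply Subtype.ext
      apply Subtype.ext
      show MulAut.conj (a : G) = MulAut.conj (b : G)
      ext x
      simp only [MulAut.conj_apply]
      have hzx : x * z = z * x := Subgroup.mem_center_iff.mp hz x
      rw [hb, mul_inv_rev]
      calc (a : G) * x * (a : G)⁻¹
          = (a : G) * (x * z) * (z⁻¹ * (a : G)⁻¹) := by group
        _ = (a : G) * (z * x) * (z⁻¹ * (a : G)⁻¹) := by rw [hzx]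
        _ = (a : G) * z * x * (z⁻¹ * (a : G)⁻¹) := by rw [mul_assoc (a : G) z x]
    let cbar : (↥C ⧸ (Subgroup.center G).subgroupOf C) →
        ((outProj G).comp (autFix G H).subtype).ker := Quotient.lift c hwd
    have hsurj : Function.Surjective cbar := by
      rintro ⟨⟨φ, hfix⟩, hk⟩
      have h1 : outProj G φ = 1 := MonoidHom.mem_ker.mp hk
      obtain ⟨g, hg⟩ := outProj_eq_one_iff.mp h1
      have hgC : g ∈ C := by
        rw [hC]
        rw [Subgroup.mem_centralizer_iff]
        intro h hh
        have h2 : g * h * g⁻¹ = h := by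
          have := hfix h hh
          rw [← hg] at this
          exact this
        calc h * g = (g * h * g⁻¹) * g := by rw [h2]
          _ = g * h := by group
      refine ⟨QuotientGroup.mk ⟨g, hgC⟩, ?_⟩
      apply Subtype.ext
      apply Subtype.ext
      exact hg
    exact Finite.of_surjective cbar hsurj
  · -- the image has finite index
    classical
    obtain ⟨S, hS⟩ := hconj
    have hBF_le_B : (autFix G H).map (outProj G) ≤ (autSetwise G H).map (outProj G) :=
      Subgroup.map_mono autFix_le_autSetwise
    have hfsurj : Function.Surjective (outProj G) := QuotientGroup.mk'_surjective (Inn G)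
    set B := (autSetwise G H).map (outProj G) with hB
    set BF := (autFix G H).map (outProj G) with hBFdef
    set P := B.comap (outProj G) with hP
    -- Step A : B has finite index
    let j0 : MulAut G → Quotient (conjSetoid G) :=
      fun φ => Quotient.mk (conjSetoid G) (H.map φ.toMonoidHom)
    have hj0 : ∀ a b : MulAut G, (QuotientGroup.leftRel P) a b → j0 a = j0 b := by
      intro a b hab
      rw [QuotientGroup.leftRel_apply] at hab
      obtain ⟨χ, hχA, hχ⟩ := Subgroup.mem_map.mp (Subgroup.mem_comap.mp hab)
      rw [outProj_eq_iff] at hχ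
      obtain ⟨z, hzInn, hzeq⟩ := hχ
      obtain ⟨g, rfl⟩ := hzInn
      have hbval : b = a * (χ * MulAut.conj g) := by
        rw [hzeq, mul_inv_cancel_left]
      apply Quotient.sound
      refine ⟨a (χ g), ?_⟩
      show conjSubgroup G (a (χ g)) (H.map a.toMonoidHom) = H.map b.toMonoidHom
      rw [hbval, mapAut_mul, mapAut_mul]
      show conjSubgroup G (a (χ g)) (H.map a.toMonoidHom) =
        ((conjSubgroup G g H).map χ.toMonoidHom).map a.toMonoidHom
      rw [mapAut_conjSubgroup, mapAut_conjSubgroup, autSetwise_map_eq hχA]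
    have hj0inj : ∀ a b : MulAut G, j0 a = j0 b → (QuotientGroup.leftRel P) a b := by
      intro a b hab
      obtain ⟨w, hw⟩ := Quotient.exact hab
      rw [QuotientGroup.leftRel_apply, Subgroup.mem_comap]
      set χ := a⁻¹ * (MulAut.conj w)⁻¹ * b with hχdef
      have hχA : χ ∈ autSetwise G H := by
        apply mem_autSetwise_of_map_eq
        rw [hχdef, mapAut_mul, mapAut_mul, ← map_inv MulAut.conj w]
        show ((conjSubgroup G w⁻¹ (H.map b.toMonoidHom))).map (a⁻¹).toMonoidHom = H
        rw [← hw, conjSubgroup_conjSubgroup, inv_mul_cancel, conjSubgroup_one,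
          ← mapAut_mul, inv_mul_cancel, mapAut_one]
      refine Subgroup.mem_map.mpr ⟨χ, hχA, ?_⟩
      rw [outProj_eq_iff]
      refine ⟨χ⁻¹ * (a⁻¹ * b), ?_, by group⟩
      have hval : χ⁻¹ * (a⁻¹ * b) = b⁻¹ * MulAut.conj w * b := by
        rw [hχdef]; group
      rw [hval]
      have := (Inn.normal G).conj_mem (MulAut.conj w) ⟨w, rfl⟩ b⁻¹
      simpa using this
    have hPfin : Finite (MulAut G ⧸ P) := by
      let j : MulAut G ⧸ P → Quotient (conjSetoid G) := Quotient.lift j0 hj0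
      have hjinj : Function.Injective j := by
        intro q1 q2 h
        refine Quotient.inductionOn₂ q1 q2 (fun a b h => Quotient.sound (hj0inj a b h)) h
      have hsel : ∀ q : MulAut G ⧸ P, ∃ K' ∈ S, ∃ g : G,
          conjSubgroup G g ((j q).out) = K' := by
        intro q
        induction q using Quotient.inductionOn with
        | h φ =>
          have h1 : Quotient.mk (conjSetoid G) ((j (Quotient.mk _ φ)).out) =
              Quotient.mk (conjSetoid G) (H.map φ.toMonoidHom) := by
            rw [Quotient.out_eq]
            rfl
          obtain ⟨w, hw⟩ := Quotient.exact h1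
          have hne : Nonempty (↥((j (Quotient.mk _ φ)).out) ≃* ↥H) :=
            ⟨(conjEquiv w _).trans ((MulEquiv.subgroupCongr hw).trans
              (H.equivMapOfInjective φ.toMonoidHom φ.injective).symm)⟩
          exact hS _ hne
      choose Ksel hKS gsel hgsel using hsel
      have hinj : Function.Injective
          (fun q : MulAut G ⧸ P => (⟨Ksel q, hKS q⟩ : {x // x ∈ S})) := by
        intro q1 q2 h
        have hK : Ksel q1 = Ksel q2 := congrArg Subtype.val h
        apply hjinj
        have hrel : (conjSetoid G) ((j q1).out) ((j q2).out) := by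
          refine (conjSetoid G).iseqv.trans (⟨gsel q1, hgsel q1⟩ : (conjSetoid G) _ (Ksel q1))
            ((conjSetoid G).iseqv.symm ⟨gsel q2, ?_⟩)
          rw [hgsel q2]; exact hK.symm
        calc j q1 = Quotient.mk (conjSetoid G) ((j q1).out) := (Quotient.out_eq _).symm
          _ = Quotient.mk (conjSetoid G) ((j q2).out) := Quotient.sound hrel
          _ = j q2 := Quotient.out_eq _
      exact Finite.of_injective _ hinj
    haveI := hPfin
    haveI hPFI : P.FiniteIndex := Subgroup.finiteIndex_of_finite_quotient
    have hBFI : B.FiniteIndex := by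
      have hPB : P.index = B.index := Subgroup.index_comap_of_surjective B hfsurj
      exact ⟨hPB ▸ hPFI.index_ne_zero⟩
    -- Step B : BF has finite index in B
    let ρ : ↥(autSetwise G H) →* Out ↥H := (outProj ↥H).comp (resAut H)
    have hkerfin : Finite (↥(autSetwise G H) ⧸ ρ.ker) :=
      Finite.of_injective (QuotientGroup.kerLift ρ) (QuotientGroup.kerLift_injective ρ)
    let τ0 : ↥(autSetwise G H) → (↥B) ⧸ BF.subgroupOf B := fun φ =>
      QuotientGroup.mk ⟨outProj G φ.1, Subgroup.mem_map_of_mem _ φ.2⟩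
    have hτwd : ∀ a b : ↥(autSetwise G H), (QuotientGroup.leftRel ρ.ker) a b → τ0 a = τ0 b := by
      intro a b hab
      rw [QuotientGroup.leftRel_apply] at hab
      have h1 : outProj ↥H (resAut H (a⁻¹ * b)) = 1 := MonoidHom.mem_ker.mp hab
      obtain ⟨h, hh⟩ := outProj_eq_one_iff.mp h1
      show QuotientGroup.mk _ = QuotientGroup.mk _
      rw [QuotientGroup.eq, Subgroup.mem_subgroupOf]
      show (outProj G a.1)⁻¹ * outProj G b.1 ∈ BF
      have hval : (outProj G a.1)⁻¹ * outProj G b.1 =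
          outProj G ((a⁻¹ * b : ↥(autSetwise G H)) : MulAut G) := by
        rw [← map_inv, ← map_mul]; rfl
      set d : MulAut G := ((a⁻¹ * b : ↥(autSetwise G H)) : MulAut G) with hd
      have hfixχ : (MulAut.conj ((h : G)))⁻¹ * d ∈ autFix G H := by
        intro x hx
        have happ : d x = (h : G) * x * (h : G)⁻¹ := by
          have h2 := congrArg (fun (ψ : MulAut ↥H) => ((ψ ⟨x, hx⟩ : ↥H) : G)) hh
          exact h2.symm
        show ((MulAut.conj (h : G))⁻¹ * d) x = x
        have h3 : ((MulAut.conj (h : G))⁻¹ * d) x = (MulAut.conj (h : G))⁻¹ (d x) := rfl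
        rw [h3, happ, ← map_inv MulAut.conj]
        simp [MulAut.conj_apply, mul_assoc]
      rw [hval]
      have hsplit : d = MulAut.conj (h : G) * ((MulAut.conj ((h : G)))⁻¹ * d) := by group
      rw [hsplit, map_mul, outProj_conj, one_mul]
      exact Subgroup.mem_map_of_mem _ hfixχ
    let τ : (↥(autSetwise G H) ⧸ ρ.ker) → (↥B ⧸ BF.subgroupOf B) := Quotient.lift τ0 hτwd
    have hτsurj : Function.Surjective τ := by
      intro q
      induction q using Quotient.inductionOn with
      | h b =>
        obtain ⟨x, hxB⟩ := b
        obtain ⟨φ, hφA, hφ⟩ := Subgroup.mem_map.mp hxB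
        refine ⟨Quotient.mk _ (⟨φ, hφA⟩ : ↥(autSetwise G H)), ?_⟩
        show QuotientGroup.mk (⟨outProj G φ, Subgroup.mem_map_of_mem _ hφA⟩ : ↥B) =
          QuotientGroup.mk (⟨x, hxB⟩ : ↥B)
        exact congrArg QuotientGroup.mk (Subtype.ext hφ)
    haveI hfin2 : Finite (↥B ⧸ BF.subgroupOf B) := Finite.of_surjective τ hτsurj
    have hrel : (BF.subgroupOf B).FiniteIndex := Subgroup.finiteIndex_of_finite_quotient
    refine ⟨?_⟩
    rw [← Subgroup.relIndex_mul_index hBF_le_B]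
    exact Nat.mul_ne_zero hrel.index_ne_zero hBFI.index_ne_zero
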